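/- Let F be a field of characteristic 0 and let A ∈ M_n(F) be a nil-clean matrix. Then A is nilpotent if and only if the trace of A equals 0. -/

import Mathlib

/-- An element of a ring is *nil-clean* if it is the sum of an idempotent
and a nilpotent element. -/
def IsNilClean {R : Type*} [Ring R] (a : R) : Prop :=
  ∃ e n : R, e ^ 2 = e ∧ IsNilpotent n ∧ a = e + n

/-- Over a field of characteristic `0`, a nil-clean matrix is nilpotent iff its
trace is `0`. -/
theorem stmt_6 {F : Type*} [Field F] [CharZero F] {n : ℕ}
    (A : Matrix (Fin n) (Fin n) F) (hA : IsNilClean A) :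
    IsNilpotent A ↔ A.trace = 0 := by
  constructor
  · intro h
    exact (Matrix.isNilpotent_trace_of_isNilpotent h).eq_zero
  · rintro htr
    obtain ⟨E, N, hE, hN, hAEN⟩ := hA
    -- trace E = 0
    have htrN : N.trace = 0 := (Matrix.isNilpotent_trace_of_isNilpotent hN).eq_zero
    have htrE : E.trace = 0 := by
      have := htr
      rw [hAEN, Matrix.trace_add, htrN, add_zero] at this
      exact this
    -- show E = 0
    have hE0 : E = 0 := by
      let f := Matrix.toLin' E
      have hf : f ∘ₗ f = f := by
        simp only [f, ← Matrix.toLin'_mul]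
        rw [← pow_two, hE]
      obtain ⟨p, hp⟩ := (LinearMap.isProj_iff_isIdempotentElem f).mpr hf
      have htrf : LinearMap.trace F (Fin n → F) f = E.trace := by
        rw [LinearMap.trace_eq_matrix_trace F (Pi.basisFun F (Fin n))]
        congr 1
        rw [LinearMap.toMatrix_eq_toMatrix']
        exact LinearMap.toMatrix'_toLin' E
      have hfin : (Module.finrank F p : F) = 0 := by
        rw [← hp.trace, htrf, htrE]
      have hp0 : p = ⊥ := by
        have : Module.finrank F p = 0 := by exact_mod_cast hfin
        exact Submodule.finrank_eq_zero.mp this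
      have hfz : f = 0 := LinearMap.ext fun x => by
        have := hp.map_mem x
        rw [hp0] at this
        simpa using this
      exact Matrix.toLin'.injective (by rw [map_zero]; exact hfz)
    rw [hAEN, hE0, zero_add]
    exact hN
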